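/- Every maximal reduction sequence of an acyclic negotiation with K atoms and L outcomes consisting only of applications of the merge and d-shortcut rules has length at most K·L. -/

import Mathlib

universe u v w

/-- A (distributed) negotiation over a finite set of agents, a type of atoms and a type
of result names.  `atoms` is the finite set of negotiation atoms, `n0`/`nf` the initial
and final atoms, `parties n` the parties of atom `n`, `results n` its finite set of
results, and `trans n p r` the set of atoms agent `p` is ready to engage in after the
outcome `(n, r)`. -/
structure Negotiation (Agent : Type u) (Atom : Type v) (Res : Type w)
    [Fintype Agent] [DecidableEq Agent] [DecidableEq Atom] [DecidableEq Res] where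
  atoms : Finset Atom
  n0 : Atom
  nf : Atom
  parties : Atom → Finset Agent
  results : Atom → Finset Res
  trans : Atom → Agent → Res → Finset Atom
  n0_mem : n0 ∈ atoms
  nf_mem : nf ∈ atoms
  parties_nonempty : ∀ n ∈ atoms, (parties n).Nonempty
  results_nonempty : ∀ n ∈ atoms, (results n).Nonempty
  parties_n0 : parties n0 = Finset.univ
  parties_nf : parties nf = Finset.univ
  trans_sub : ∀ n ∈ atoms, ∀ p ∈ parties n, ∀ r ∈ results n, trans n p r ⊆ atoms
  trans_parties : ∀ n ∈ atoms, ∀ p ∈ parties n, ∀ r ∈ results n, ∀ n' ∈ trans n p r, p ∈ parties n'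
  trans_empty_iff : ∀ n ∈ atoms, ∀ p ∈ parties n, ∀ r ∈ results n, (trans n p r = ∅ ↔ n = nf)
  on_path : ∀ n ∈ atoms,
    Relation.ReflTransGen (fun a b => ∃ p ∈ parties a, ∃ r ∈ results a, b ∈ trans a p r) n0 n ∧
    Relation.ReflTransGen (fun a b => ∃ p ∈ parties a, ∃ r ∈ results a, b ∈ trans a p r) n nf

namespace Negotiation

variable {Agent : Type u} {Atom : Type v} {Res : Type w}
variable [Fintype Agent] [DecidableEq Agent] [DecidableEq Atom] [DecidableEq Res]

/-- A marking assigns to each agent the set of atoms it is ready to engage in. -/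
def Marking (Agent : Type u) (Atom : Type v) : Type (max u v) := Agent → Finset Atom

/-- A marking enables an atom if every party of the atom is ready to engage in it. -/
def Enables (N : Negotiation Agent Atom Res) (x : Marking Agent Atom) (n : Atom) : Prop :=
  n ∈ N.atoms ∧ ∀ p ∈ N.parties n, n ∈ x p

/-- Small step: the occurrence of the outcome `o = (n, r)` from marking `x` yields `y`. -/
def StepTo (N : Negotiation Agent Atom Res) (x : Marking Agent Atom) (o : Atom × Res)
    (y : Marking Agent Atom) : Prop :=
  N.Enables x o.1 ∧ o.2 ∈ N.results o.1 ∧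
    ∀ p, y p = if p ∈ N.parties o.1 then N.trans o.1 p o.2 else x p

/-- Occurrence sequences: `Seq N x σ y` means the finite sequence of outcomes `σ`
can occur from marking `x` and leads to marking `y`. -/
inductive Seq (N : Negotiation Agent Atom Res) :
    Marking Agent Atom → List (Atom × Res) → Marking Agent Atom → Prop
  | nil (x : Marking Agent Atom) : Seq N x [] x
  | cons {x y z : Marking Agent Atom} {o : Atom × Res} {σ : List (Atom × Res)} :
      N.StepTo x o y → Seq N y σ z → Seq N x (o :: σ) z

/-- The initial marking. -/
def x0 (N : Negotiation Agent Atom Res) : Marking Agent Atom := fun _ => {N.n0}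

/-- The final marking. -/
def xf (_N : Negotiation Agent Atom Res) : Marking Agent Atom := fun _ => ∅

/-- A marking is reachable if some occurrence sequence leads to it from the initial marking. -/
def Reachable (N : Negotiation Agent Atom Res) (x : Marking Agent Atom) : Prop :=
  ∃ σ, N.Seq N.x0 σ x

/-- A large step is an occurrence sequence from the initial to the final marking. -/
def LargeStep (N : Negotiation Agent Atom Res) (σ : List (Atom × Res)) : Prop :=
  N.Seq N.x0 σ N.xf

/-- Soundness: every atom is enabled at some reachable marking, and from every
reachable marking the final marking is reachable. -/
def Sound (N : Negotiation Agent Atom Res) : Prop :=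
  (∀ n ∈ N.atoms, ∃ x, N.Reachable x ∧ N.Enables x n) ∧
  (∀ x, N.Reachable x → ∃ τ, N.Seq x τ N.xf)

/-- An agent is deterministic if it is never ready to engage in more than one atom. -/
def DeterministicAgent (N : Negotiation Agent Atom Res) (p : Agent) : Prop :=
  ∀ n ∈ N.atoms, n ≠ N.nf → p ∈ N.parties n → ∀ r ∈ N.results n, ∃ n', N.trans n p r = {n'}

/-- A negotiation is deterministic if all its agents are. -/
def Deterministic (N : Negotiation Agent Atom Res) : Prop := ∀ p, N.DeterministicAgent p

/-- Weak determinism: for every `(n, p, r)` there is a deterministic agent which is a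
party of every atom in `trans n p r`. -/
def WeaklyDeterministic (N : Negotiation Agent Atom Res) : Prop :=
  ∀ n ∈ N.atoms, ∀ p ∈ N.parties n, ∀ r ∈ N.results n,
    ∃ b, N.DeterministicAgent b ∧ ∀ n' ∈ N.trans n p r, b ∈ N.parties n'

/-- The edge relation of the graph of a negotiation. -/
def Edge (N : Negotiation Agent Atom Res) (a b : Atom) : Prop :=
  a ∈ N.atoms ∧ b ∈ N.atoms ∧ ∃ p ∈ N.parties a, ∃ r ∈ N.results a, b ∈ N.trans a p r

/-- A negotiation is acyclic if its graph has no cycles. -/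
def Acyclic (N : Negotiation Agent Atom Res) : Prop :=
  ∀ n, ¬ Relation.TransGen N.Edge n n

/-- The arc `(n, p, r, n')` occurs in the occurrence sequence `σ`. -/
def ArcOccursIn (N : Negotiation Agent Atom Res) (n : Atom) (p : Agent) (r : Res) (n' : Atom)
    (σ : List (Atom × Res)) : Prop :=
  ∃ (σ1 σ2 σ3 : List (Atom × Res)) (r' : Res), r' ∈ N.results n' ∧
    σ = σ1 ++ (n, r) :: σ2 ++ (n', r') :: σ3 ∧ ∀ o ∈ σ2, p ∉ N.parties o.1

/-- The outcome `(n, r)` unconditionally enables the atom `n'`. -/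
def UncondEnables (N : Negotiation Agent Atom Res) (n : Atom) (r : Res) (n' : Atom) : Prop :=
  N.parties n' ⊆ N.parties n ∧ ∀ p ∈ N.parties n', N.trans n p r = {n'}

/-- The outcome `(n, r)` has exclusive access to the atom `n'`. -/
def ExclusiveAccess (N : Negotiation Agent Atom Res) (n : Atom) (r : Res) (n' : Atom) : Prop :=
  ∀ p ∈ N.parties n', n' ∈ N.trans n p r ∧
    ∀ m ∈ N.atoms, ∀ r'' ∈ N.results m, (m, r'') ≠ (n, r) → n' ∉ N.trans m p r''

/-- The outcome `(m, r'')` commits to the atom `n'`. -/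
def CommitsTo (N : Negotiation Agent Atom Res) (m : Atom) (r'' : Res) (n' : Atom) : Prop :=
  ∃ p ∈ N.parties m, N.trans m p r'' = {n'}

/-- The merge rule: two results of a non-final atom with identical transition functions
are merged into a fresh result. -/
def MergeRule (N1 N2 : Negotiation Agent Atom Res) : Prop :=
  ∃ (n : Atom) (r1 r2 r : Res), n ∈ N1.atoms ∧ n ≠ N1.nf ∧
    r1 ∈ N1.results n ∧ r2 ∈ N1.results n ∧ r1 ≠ r2 ∧
    (∀ p ∈ N1.parties n, N1.trans n p r1 = N1.trans n p r2) ∧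
    r ∉ N1.results n ∧
    N2.atoms = N1.atoms ∧ N2.n0 = N1.n0 ∧ N2.nf = N1.nf ∧ N2.parties = N1.parties ∧
    N2.results n = insert r (((N1.results n).erase r1).erase r2) ∧
    (∀ m, m ≠ n → N2.results m = N1.results m) ∧
    (∀ p, N2.trans n p r = N1.trans n p r1) ∧
    (∀ p, ∀ r'' ∈ ((N1.results n).erase r1).erase r2, N2.trans n p r'' = N1.trans n p r'') ∧
    (∀ m, m ≠ n → N2.trans m = N1.trans m)

/-- The iteration rule: a result after which all parties return to the same atom is removed. -/
def IterationRule (N1 N2 : Negotiation Agent Atom Res) : Prop :=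
  ∃ (n : Atom) (r : Res), n ∈ N1.atoms ∧ r ∈ N1.results n ∧
    (∀ p ∈ N1.parties n, N1.trans n p r = {n}) ∧
    N2.atoms = N1.atoms ∧ N2.n0 = N1.n0 ∧ N2.nf = N1.nf ∧ N2.parties = N1.parties ∧
    N2.results n = (N1.results n).erase r ∧
    (∀ m, m ≠ n → N2.results m = N1.results m) ∧
    N2.trans = N1.trans

/-- The useless arc rule: under the guard consisting of three distinct arcs
`(n,p,r,n')`, `(n,p,r,n'')`, `(n,q,r,n')` with `trans n q r = {n'}`, the arc
`(n,p,r,n'')` is removed (and the result is again a negotiation, since `N2` is one). -/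
def UselessArcRule (N1 N2 : Negotiation Agent Atom Res) : Prop :=
  ∃ (n : Atom) (p q : Agent) (r : Res) (n' n'' : Atom),
    n ∈ N1.atoms ∧ p ∈ N1.parties n ∧ q ∈ N1.parties n ∧ r ∈ N1.results n ∧
    p ≠ q ∧ n' ≠ n'' ∧
    n' ∈ N1.trans n p r ∧ n'' ∈ N1.trans n p r ∧ N1.trans n q r = {n'} ∧
    N2.atoms = N1.atoms ∧ N2.n0 = N1.n0 ∧ N2.nf = N1.nf ∧
    N2.parties = N1.parties ∧ N2.results = N1.results ∧
    N2.trans n p r = (N1.trans n p r).erase n'' ∧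
    (∀ (m : Atom) (p' : Agent) (r' : Res), (m, p', r') ≠ (n, p, r) →
      N2.trans m p' r' = N1.trans m p' r')

/-- The shortcut rule applied to the outcome `(n, r)` which unconditionally enables `n'`,
using `f` to produce the fresh result names `r'_s = f r'`. -/
def ShortcutRuleAt (N1 N2 : Negotiation Agent Atom Res) (n : Atom) (r : Res) (n' : Atom)
    (f : Res → Res) : Prop :=
  n ∈ N1.atoms ∧ n' ∈ N1.atoms ∧ r ∈ N1.results n ∧ n' ≠ n ∧
  N1.UncondEnables n r n' ∧
  ((n' ≠ N1.nf ∧ N1.ExclusiveAccess n r n') ∨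
   (n' ≠ N1.nf ∧ ∃ (m : Atom) (r'' : Res), m ∈ N1.atoms ∧ r'' ∈ N1.results m ∧
      (m, r'') ≠ (n, r) ∧ N1.CommitsTo m r'' n') ∨
   (n' = N1.nf ∧ N1.ExclusiveAccess n r n' ∧ N1.results n = {r})) ∧
  Set.InjOn f ↑(N1.results n') ∧ (∀ r' ∈ N1.results n', f r' ∉ N1.results n) ∧
  N2.n0 = N1.n0 ∧ N2.parties = N1.parties ∧
  N2.results n = ((N1.results n).erase r) ∪ (N1.results n').image f ∧
  (∀ m, m ≠ n → N2.results m = N1.results m) ∧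
  (∀ r' ∈ N1.results n', ∀ p ∈ N1.parties n', N2.trans n p (f r') = N1.trans n' p r') ∧
  (∀ r' ∈ N1.results n', ∀ p ∈ N1.parties n, p ∉ N1.parties n' →
      N2.trans n p (f r') = N1.trans n p r) ∧
  (∀ r'' ∈ (N1.results n).erase r, ∀ p, N2.trans n p r'' = N1.trans n p r'') ∧
  (∀ m, m ≠ n → N2.trans m = N1.trans m) ∧
  (N1.ExclusiveAccess n r n' → N2.atoms = N1.atoms.erase n') ∧
  (¬ N1.ExclusiveAccess n r n' → N2.atoms = N1.atoms) ∧
  ((n' = N1.nf ∧ N1.ExclusiveAccess n r n') → N2.nf = n) ∧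
  (¬ (n' = N1.nf ∧ N1.ExclusiveAccess n r n') → N2.nf = N1.nf)

/-- The shortcut rule as a relation between negotiations. -/
def ShortcutRule (N1 N2 : Negotiation Agent Atom Res) : Prop :=
  ∃ n r n' f, ShortcutRuleAt N1 N2 n r n' f

/-- The deterministic shortcut rule: the shortcut rule restricted to the case where the
unconditionally enabled atom has at most one result. -/
def DShortcutRule (N1 N2 : Negotiation Agent Atom Res) : Prop :=
  ∃ n r n' f, ShortcutRuleAt N1 N2 n r n' f ∧ (N1.results n').card ≤ 1

/-- A negotiation is irreducible if none of the four reduction rules is applicable. -/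
def Irreducible (N : Negotiation Agent Atom Res) : Prop :=
  ∀ N' : Negotiation Agent Atom Res,
    ¬ (MergeRule N N' ∨ IterationRule N N' ∨ UselessArcRule N N' ∨ ShortcutRule N N')

/-- The marking `x_n` that puts exactly the parties of `n` on `n`. -/
def xAt (N : Negotiation Agent Atom Res) (n : Atom) : Marking Agent Atom :=
  fun p => if p ∈ N.parties n then {n} else ∅

/-- An `(n, r)`-sequence: a finite occurrence sequence from `x_n` starting with the
outcome `(n, r)` all of whose atoms have their parties included in the parties of `n`. -/
def NRSeq (N : Negotiation Agent Atom Res) (n : Atom) (r : Res)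
    (σ : List (Atom × Res)) : Prop :=
  (∃ τ, σ = (n, r) :: τ) ∧ (∃ y, N.Seq (N.xAt n) σ y) ∧
    ∀ o ∈ σ, N.parties o.1 ⊆ N.parties n

/-- The index of the outcome `(n, r)`: the length of a longest (maximal) `(n,r)`-sequence
minus one. -/
noncomputable def outcomeIndex (N : Negotiation Agent Atom Res) (n : Atom) (r : Res) : ℕ :=
  sSup {l : ℕ | ∃ σ, N.NRSeq n r σ ∧ σ.length = l} - 1

/-- The index of a negotiation: the sum of the indices of all non-final outcomes. -/
noncomputable def negIndex (N : Negotiation Agent Atom Res) : ℕ :=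
  (N.atoms.filter (fun n => n ≠ N.nf)).sum
    (fun n => (N.results n).sum (fun r => N.outcomeIndex n r))

/-- An `n`-sequence: an `(n, r)`-sequence for some result `r` of `n`. -/
def NSeq (N : Negotiation Agent Atom Res) (n : Atom) (σ : List (Atom × Res)) : Prop :=
  (∃ r ∈ N.results n, ∃ τ, σ = (n, r) :: τ) ∧ (∃ y, N.Seq (N.xAt n) σ y) ∧
    ∀ o ∈ σ, N.parties o.1 ⊆ N.parties n

/-- A maximal `n`-sequence: it cannot be extended to a longer `n`-sequence. -/
def MaximalNSeq (N : Negotiation Agent Atom Res) (n : Atom) (σ : List (Atom × Res)) : Prop :=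
  N.NSeq n σ ∧ ∀ o : Atom × Res, ¬ N.NSeq n (σ ++ [o])

/-- An outcome `(n, r)` is uniform: all parties of `n` move to the same set of atoms. -/
def Uniform (N : Negotiation Agent Atom Res) (n : Atom) (r : Res) : Prop :=
  ∀ p ∈ N.parties n, ∀ q ∈ N.parties n, N.trans n p r = N.trans n q r

/-- A replication: all atoms have the same parties and all outcomes are uniform. -/
def Replication (N : Negotiation Agent Atom Res) : Prop :=
  (∀ n ∈ N.atoms, ∀ m ∈ N.atoms, N.parties n = N.parties m) ∧
  (∀ n ∈ N.atoms, ∀ r ∈ N.results n, N.Uniform n r)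

/-- A path of a negotiation: a list of triples `(nᵢ, pᵢ, rᵢ)` with `nᵢ₊₁ ∈ trans nᵢ pᵢ rᵢ`. -/
def IsPath (N : Negotiation Agent Atom Res) (π : List (Atom × Agent × Res)) : Prop :=
  (∀ t ∈ π, t.1 ∈ N.atoms ∧ t.2.1 ∈ N.parties t.1 ∧ t.2.2 ∈ N.results t.1) ∧
  π.Chain' (fun s t => t.1 ∈ N.trans s.1 s.2.1 s.2.2)

/-- A loop: a nonempty sequence of outcomes leading from some reachable marking back to itself. -/
def IsLoop (N : Negotiation Agent Atom Res) (σ : List (Atom × Res)) : Prop :=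
  σ ≠ [] ∧ ∃ x, N.Reachable x ∧ N.Seq x σ x

end Negotiation

namespace Negotiation
variable {Agent : Type u} {Atom : Type v} {Res : Type w}
variable [Fintype Agent] [DecidableEq Agent] [DecidableEq Atom] [DecidableEq Res]


section Aux

lemma seq_append_split {N : Negotiation Agent Atom Res} {x y : Marking Agent Atom}
    {l1 l2 : List (Atom × Res)} (h : N.Seq x (l1 ++ l2) y) :
    ∃ z, N.Seq x l1 z ∧ N.Seq z l2 y := by
  induction l1 generalizing x with
  | nil => exact ⟨x, .nil x, h⟩
  | cons o t ih =>
    cases h with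
    | cons hst hs =>
      obtain ⟨z, h1, h2⟩ := ih hs
      exact ⟨z, .cons hst h1, h2⟩

lemma seq_token_path {N : Negotiation Agent Atom Res} {x y : Marking Agent Atom}
    {σ : List (Atom × Res)} (h : N.Seq x σ y) :
    ∀ p a, a ∈ y p → ∃ b ∈ x p, Relation.ReflTransGen N.Edge b a := by
  induction h with
  | nil => exact fun p a ha => ⟨a, ha, .refl⟩
  | @cons x y z o σ hst hs ih =>
    intro p a ha
    obtain ⟨c, hc, hca⟩ := ih p a ha
    rw [hst.2.2 p] at hc
    by_cases hp : p ∈ N.parties o.1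
    · rw [if_pos hp] at hc
      refine ⟨o.1, hst.1.2 p hp, Relation.ReflTransGen.head ?_ hca⟩
      exact ⟨hst.1.1, N.trans_sub o.1 hst.1.1 p hp o.2 hst.2.1 hc, p, hp, o.2, hst.2.1, hc⟩
    · rw [if_neg hp] at hc
      exact ⟨c, hc, hca⟩

lemma seq_mem {N : Negotiation Agent Atom Res} {x y : Marking Agent Atom}
    {σ : List (Atom × Res)} (h : N.Seq x σ y) :
    ∀ o ∈ σ, o.1 ∈ N.atoms ∧ o.2 ∈ N.results o.1 := by
  induction h with
  | nil => simp
  | cons hst hs ih =>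
    intro o ho
    rcases List.mem_cons.1 ho with rfl | ho
    · exact ⟨hst.1.1, hst.2.1⟩
    · exact ih o ho

lemma seq_nodup {N : Negotiation Agent Atom Res} (hacyc : N.Acyclic)
    {x y : Marking Agent Atom} {σ : List (Atom × Res)} (h : N.Seq x σ y) :
    (σ.map Prod.fst).Nodup := by
  induction h with
  | nil => simp
  | @cons x y z o σ hst hs ih =>
    rw [List.map_cons, List.nodup_cons]
    refine ⟨fun hmem => ?_, ih⟩
    obtain ⟨⟨m, s'⟩, hmem, hfst⟩ := List.mem_map.1 hmem
    obtain ⟨τa, τb, rfl⟩ := List.append_of_mem hmem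
    obtain ⟨w, hw1, hw2⟩ := seq_append_split hs
    cases hw2 with
    | cons hst2 _ =>
      have hm : m = o.1 := hfst
      subst hm
      obtain ⟨p, hp⟩ := N.parties_nonempty o.1 hst.1.1
      have ho1 : o.1 ∈ w p := hst2.1.2 p hp
      obtain ⟨b, hb, hba⟩ := seq_token_path hw1 p o.1 ho1
      rw [hst.2.2 p, if_pos hp] at hb
      refine hacyc o.1 (Relation.TransGen.head' ?_ hba)
      exact ⟨hst.1.1, N.trans_sub o.1 hst.1.1 p hp o.2 hst.2.1 hb, p, hp, o.2, hst.2.1, hb⟩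

lemma nrseq_length_le {N : Negotiation Agent Atom Res} (hacyc : N.Acyclic)
    {n : Atom} {r : Res} {σ : List (Atom × Res)} (h : N.NRSeq n r σ) :
    σ.length ≤ N.atoms.card := by
  obtain ⟨-, ⟨y, hseq⟩, -⟩ := h
  have hnd := seq_nodup hacyc hseq
  have hsub : (σ.map Prod.fst).toFinset ⊆ N.atoms := by
    intro a ha
    obtain ⟨o, ho, rfl⟩ := List.mem_map.1 (List.mem_toFinset.1 ha)
    exact (seq_mem hseq o ho).1
  calc σ.length = (σ.map Prod.fst).length := by simp
    _ = (σ.map Prod.fst).toFinset.card := (List.toFinset_card_of_nodup hnd).symm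
    _ ≤ N.atoms.card := Finset.card_le_card hsub

/-- Set of lengths of `(n,r)`-sequences. -/
def lenSet (N : Negotiation Agent Atom Res) (n : Atom) (r : Res) : Set ℕ :=
  {l | ∃ σ, N.NRSeq n r σ ∧ σ.length = l}

noncomputable def hIdx (N : Negotiation Agent Atom Res) (n : Atom) (r : Res) : ℕ :=
  sSup (N.lenSet n r)

noncomputable def mu (N : Negotiation Agent Atom Res) : ℕ :=
  N.atoms.sum fun n => (N.results n).sum fun r => N.hIdx n r

lemma lenSet_bddAbove {N : Negotiation Agent Atom Res} (hacyc : N.Acyclic) (n : Atom) (r : Res) :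
    BddAbove (N.lenSet n r) := by
  refine ⟨N.atoms.card, fun l hl => ?_⟩
  obtain ⟨σ, hσ, rfl⟩ := hl
  exact nrseq_length_le hacyc hσ

lemma nrseq_single {N : Negotiation Agent Atom Res} {n : Atom} {r : Res}
    (hn : n ∈ N.atoms) (hr : r ∈ N.results n) : N.NRSeq n r [(n, r)] := by
  refine ⟨⟨[], rfl⟩, ⟨fun p => if p ∈ N.parties n then N.trans n p r else N.xAt n p, ?_⟩, ?_⟩
  · refine .cons ⟨⟨hn, fun p hp => ?_⟩, hr, fun p => rfl⟩ (.nil _)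
    simp [xAt, if_pos hp]
  · intro o ho
    simp only [List.mem_singleton] at ho
    subst ho
    exact fun q hq => hq

lemma hIdx_pos {N : Negotiation Agent Atom Res} (hacyc : N.Acyclic) {n : Atom} {r : Res}
    (hn : n ∈ N.atoms) (hr : r ∈ N.results n) : 1 ≤ N.hIdx n r :=
  le_csSup (lenSet_bddAbove hacyc n r) ⟨[(n, r)], nrseq_single hn hr, rfl⟩

lemma hIdx_le_card {N : Negotiation Agent Atom Res} (hacyc : N.Acyclic) (n : Atom) (r : Res) :
    N.hIdx n r ≤ N.atoms.card :=
  csSup_le' fun l hl => by obtain ⟨σ, hσ, rfl⟩ := hl; exact nrseq_length_le hacyc hσ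

lemma mu_le {N : Negotiation Agent Atom Res} (hacyc : N.Acyclic) :
    N.mu ≤ N.atoms.card * N.atoms.sum (fun n => (N.results n).card) := by
  calc N.mu ≤ N.atoms.sum (fun n => (N.results n).sum fun _ => N.atoms.card) := by
        refine Finset.sum_le_sum fun n hn => Finset.sum_le_sum fun r hr => ?_
        exact hIdx_le_card hacyc n r
    _ = N.atoms.sum (fun n => (N.results n).card * N.atoms.card) := by
        simp [Finset.sum_const, mul_comm]
    _ = N.atoms.sum (fun n => (N.results n).card) * N.atoms.card := by
        rw [Finset.sum_mul]
    _ = N.atoms.card * N.atoms.sum (fun n => (N.results n).card) := mul_comm _ _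

lemma sSup_add_le {S : Set ℕ} {a c : ℕ} (h1 : ∀ l ∈ S, l + c ≤ a) (h2 : c ≤ a) :
    sSup S + c ≤ a := by
  have : sSup S ≤ a - c := csSup_le' fun l hl => by have := h1 l hl; omega
  omega

end Aux


section MergeL
variable {N1 N2 : Negotiation Agent Atom Res}

lemma merge_edge (h : MergeRule N1 N2) : ∀ a b, N2.Edge a b → N1.Edge a b := by
  obtain ⟨n, r1, r2, r, hn, hnf, hr1, hr2, hne, htrEq, hfresh, hatoms, hn0, hnf', hparties,
    hresn, hresm, htr, htr2, htrm⟩ := h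
  rintro a b ⟨ha, hb, p, hp, s, hs, hmem⟩
  rw [hatoms] at ha hb
  rw [hparties] at hp
  by_cases han : a = n
  · subst han
    rw [hresn] at hs
    rcases Finset.mem_insert.1 hs with rfl | hs
    · exact ⟨ha, hb, p, hp, r1, hr1, by rw [← htr p]; exact hmem⟩
    · exact ⟨ha, hb, p, hp, s, Finset.mem_of_mem_erase (Finset.mem_of_mem_erase hs),
        by rw [← htr2 p s hs]; exact hmem⟩
  · rw [hresm a han] at hs
    rw [htrm a han] at hmem
    exact ⟨ha, hb, p, hp, s, hs, hmem⟩

lemma merge_acyclic (h : MergeRule N1 N2) (hacyc : N1.Acyclic) : N2.Acyclic :=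
  fun a hc => hacyc a (Relation.TransGen.mono (merge_edge h) _ _ hc)

lemma merge_mu_lt (hacyc : N1.Acyclic) (h : MergeRule N1 N2) : N2.mu < N1.mu := by
  obtain ⟨n, r1, r2, r, hn, hnf, hr1, hr2, hne, htrEq, hfresh, hatoms, hn0, hnf', hparties,
    hresn, hresm, htr, htr2, htrm⟩ := h
  set S := ((N1.results n).erase r1).erase r2 with hS
  set ι : Atom × Res → Atom × Res := fun o => if o = (n, r) then (n, r1) else o with hι
  have hιfst : ∀ o, (ι o).1 = o.1 := by
    intro o; by_cases h' : o = (n, r) <;> simp [hι, h']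
  have hSsub : S ⊆ N1.results n :=
    fun s hs => Finset.mem_of_mem_erase (Finset.mem_of_mem_erase hs)
  have hrS : r ∉ S := fun hrs => hfresh (hSsub hrs)
  have hstepmap : ∀ x o y, N2.StepTo x o y → N1.StepTo x (ι o) y := by
    rintro x ⟨a, s⟩ y ⟨⟨ha, hen⟩, hs, heq⟩
    rw [hatoms] at ha
    by_cases han : a = n
    · subst a
      rw [hresn] at hs
      by_cases hsr : s = r
      · subst s
        rw [show ι (n, r) = (n, r1) from if_pos rfl]
        refine ⟨⟨ha, fun p hp => hen p (by rw [hparties]; exact hp)⟩, hr1, fun p => ?_⟩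
        rw [heq p, hparties, htr p]
      · have hsS : s ∈ S := by
          rcases Finset.mem_insert.1 hs with h' | h'
          · exact absurd h' hsr
          · exact h'
        rw [show ι (n, s) = (n, s) from if_neg (by simp [hsr])]
        refine ⟨⟨ha, fun p hp => hen p (by rw [hparties]; exact hp)⟩, hSsub hsS, fun p => ?_⟩
        rw [heq p, hparties, htr2 p s hsS]
    · rw [show ι (a, s) = (a, s) from if_neg (by simp [han])]
      rw [hresm a han] at hs
      refine ⟨⟨ha, fun p hp => hen p (by rw [hparties]; exact hp)⟩, hs, fun p => ?_⟩
      rw [heq p, hparties, htrm a han]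
  have hseqmap : ∀ x σ y, N2.Seq x σ y → N1.Seq x (σ.map ι) y := by
    intro x σ y hsq
    induction hsq with
    | nil => exact .nil _
    | cons hst _ ih => exact .cons (hstepmap _ _ _ hst) ih
  have hxAt : ∀ a, N1.xAt a = N2.xAt a := by
    intro a; funext p; simp [xAt, hparties]
  have hnrmap : ∀ a s σ, N2.NRSeq a s σ → N1.NRSeq (ι (a, s)).1 (ι (a, s)).2 (σ.map ι) := by
    rintro a s σ ⟨⟨τ, rfl⟩, ⟨y, hseq⟩, hpar⟩
    refine ⟨⟨τ.map ι, by simp⟩, ⟨y, ?_⟩, ?_⟩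
    · rw [hιfst, hxAt]
      exact hseqmap _ _ _ hseq
    · intro o ho
      obtain ⟨o', ho', rfl⟩ := List.mem_map.1 ho
      rw [hιfst o', hιfst (a, s), ← hparties]
      exact hpar o' ho'
  have hle : ∀ a s, N2.hIdx a s ≤ N1.hIdx (ι (a, s)).1 (ι (a, s)).2 := by
    intro a s
    refine csSup_le' ?_
    rintro l ⟨σ, hσ, rfl⟩
    exact le_csSup (lenSet_bddAbove hacyc _ _) ⟨σ.map ι, hnrmap a s σ hσ, by simp⟩
  have hnlt : (N2.results n).sum (fun s => N2.hIdx n s) <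
      (N1.results n).sum (fun s => N1.hIdx n s) := by
    have e1 : insert r1 S = (N1.results n).erase r2 := by
      have hcomm : ((N1.results n).erase r1).erase r2 = ((N1.results n).erase r2).erase r1 := by
        ext x; simp only [Finset.mem_erase]; tauto
      rw [hS, hcomm]
      exact Finset.insert_erase (Finset.mem_erase.2 ⟨hne, hr1⟩)
    have hdecomp : N1.results n = insert r2 (insert r1 S) := by
      rw [e1, Finset.insert_erase hr2]
    have hr2ni : r2 ∉ insert r1 S := by
      rw [Finset.mem_insert]
      rintro (h' | h')
      · exact hne h'.symm
      · exact Finset.notMem_erase r2 _ h'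
    have hr1nS : r1 ∉ S := fun h' =>
      Finset.notMem_erase r1 _ (Finset.mem_of_mem_erase h')
    have key1 : N2.hIdx n r ≤ N1.hIdx n r1 := by
      have := hle n r
      rwa [show ι (n, r) = (n, r1) from if_pos rfl] at this
    have key2 : ∀ s ∈ S, N2.hIdx n s ≤ N1.hIdx n s := by
      intro s hs
      have := hle n s
      have hsne : (n, s) ≠ (n, r) := by
        intro h'
        have hsr : s = r := congrArg Prod.snd h'
        exact hrS (hsr ▸ hs)
      rwa [show ι (n, s) = (n, s) from if_neg hsne] at this
    have key3 : 1 ≤ N1.hIdx n r2 := hIdx_pos hacyc hn hr2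
    have hsum : S.sum (fun s => N2.hIdx n s) ≤ S.sum (fun s => N1.hIdx n s) :=
      Finset.sum_le_sum key2
    rw [hresn, Finset.sum_insert hrS]
    conv_rhs => rw [hdecomp, Finset.sum_insert hr2ni, Finset.sum_insert hr1nS]
    omega
  simp only [mu, hatoms]
  refine Finset.sum_lt_sum (fun a _ => ?_) ⟨n, hn, hnlt⟩
  by_cases han : a = n
  · subst han; exact hnlt.le
  · rw [hresm a han]
    refine Finset.sum_le_sum fun s _ => ?_
    have := hle a s
    rwa [show ι (a, s) = (a, s) from if_neg (by simp [han])] at this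

end MergeL


section ShortcutL
variable {N1 N2 : Negotiation Agent Atom Res}

/-- Expansion of an `N2`-sequence into an `N1`-sequence for the shortcut rule. -/
def expandL (n n' : Atom) (r rp fr : Res) : List (Atom × Res) → List (Atom × Res)
  | [] => []
  | o :: σ => (if o = (n, fr) then [(n, r), (n', rp)] else [o]) ++ expandL n n' r rp fr σ

lemma expandL_length (n n' : Atom) (r rp fr : Res) (σ : List (Atom × Res)) :
    σ.length ≤ (expandL n n' r rp fr σ).length := by
  induction σ with
  | nil => simp [expandL]
  | cons o τ ih =>
    simp only [expandL, List.length_append, List.length_cons]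
    split <;> simp <;> omega

lemma shortcut_atoms_sub {n n' : Atom} {r : Res} {f : Res → Res}
    (hrule : ShortcutRuleAt N1 N2 n r n' f) : N2.atoms ⊆ N1.atoms := by
  obtain ⟨hn, hn', hr, hne, hUE, hdisj, hinj, hfresh, hn0, hparties, hresn, hresm,
    htrans1, htrans2, htrans3, htransm, hatomsE, hatomsNE, hnfE, hnfNE⟩ := hrule
  by_cases hex : N1.ExclusiveAccess n r n'
  · rw [hatomsE hex]; exact Finset.erase_subset _ _
  · rw [hatomsNE hex]

lemma shortcut_edge {n n' : Atom} {r r' : Res} {f : Res → Res}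
    (hrule : ShortcutRuleAt N1 N2 n r n' f) (hr' : N1.results n' = {r'}) :
    ∀ a b, N2.Edge a b → Relation.TransGen N1.Edge a b := by
  have hsub := shortcut_atoms_sub hrule
  obtain ⟨hn, hn', hr, hne, hUE, hdisj, hinj, hfresh, hn0, hparties, hresn, hresm,
    htrans1, htrans2, htrans3, htransm, hatomsE, hatomsNE, hnfE, hnfNE⟩ := hrule
  have hrp : r' ∈ N1.results n' := hr' ▸ Finset.mem_singleton_self r'
  have hfrn : f r' ∉ N1.results n := hfresh r' hrp
  have hresn2 : N2.results n = insert (f r') ((N1.results n).erase r) := by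
    rw [hresn, hr', Finset.image_singleton, Finset.union_comm, ← Finset.insert_eq]
  rintro a b ⟨ha, hb, p, hp, s, hs, hmem⟩
  have ha1 := hsub ha
  have hb1 := hsub hb
  rw [hparties] at hp
  by_cases han : a = n
  · subst a
    rw [hresn2] at hs
    rcases Finset.mem_insert.1 hs with rfl | hs
    · by_cases hpn' : p ∈ N1.parties n'
      · rw [htrans1 r' hrp p hpn'] at hmem
        have e1 : N1.Edge n n' :=
          ⟨hn, hn', p, hUE.1 hpn', r, hr, by rw [hUE.2 p hpn']; exact Finset.mem_singleton_self n'⟩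
        have e2 : N1.Edge n' b := ⟨hn', hb1, p, hpn', r', hrp, hmem⟩
        exact .head e1 (.single e2)
      · rw [htrans2 r' hrp p hp hpn'] at hmem
        exact .single ⟨hn, hb1, p, hp, r, hr, hmem⟩
    · rw [htrans3 s hs p] at hmem
      exact .single ⟨hn, hb1, p, hp, s, Finset.mem_of_mem_erase hs, hmem⟩
  · rw [hresm a han] at hs
    rw [htransm a han] at hmem
    exact .single ⟨ha1, hb1, p, hp, s, hs, hmem⟩

lemma shortcut_acyclic {n n' : Atom} {r r' : Res} {f : Res → Res}
    (hrule : ShortcutRuleAt N1 N2 n r n' f) (hr' : N1.results n' = {r'})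
    (hacyc : N1.Acyclic) : N2.Acyclic := by
  intro a hc
  have h2 := Relation.TransGen.mono (shortcut_edge hrule hr') _ _ hc
  rw [Relation.transGen_idem] at h2
  exact hacyc a h2

lemma shortcut_seq {n n' : Atom} {r r' : Res} {f : Res → Res}
    (hrule : ShortcutRuleAt N1 N2 n r n' f) (hr' : N1.results n' = {r'}) :
    ∀ x σ y, N2.Seq x σ y → N1.Seq x (expandL n n' r r' (f r') σ) y := by
  have hsub := shortcut_atoms_sub hrule
  obtain ⟨hn, hn', hr, hne, hUE, hdisj, hinj, hfresh, hn0, hparties, hresn, hresm,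
    htrans1, htrans2, htrans3, htransm, hatomsE, hatomsNE, hnfE, hnfNE⟩ := hrule
  have hrp : r' ∈ N1.results n' := hr' ▸ Finset.mem_singleton_self r'
  have hfrn : f r' ∉ N1.results n := hfresh r' hrp
  have hresn2 : N2.results n = insert (f r') ((N1.results n).erase r) := by
    rw [hresn, hr', Finset.image_singleton, Finset.union_comm, ← Finset.insert_eq]
  intro x σ y h
  induction h with
  | nil => exact .nil _
  | @cons x y z o σ hst hs ih =>
    simp only [expandL]
    by_cases ho : o = (n, f r')
    · subst o
      rw [if_pos rfl]
      obtain ⟨⟨ha2, hen⟩, hsres, heq⟩ := hst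
      dsimp only at ha2 hen hsres heq
      simp only [List.cons_append, List.nil_append]
      refine Seq.cons (y := fun p => if p ∈ N1.parties n then N1.trans n p r else x p)
        ⟨⟨hn, fun p hp => hen p (by rw [hparties]; exact hp)⟩, hr, fun p => rfl⟩ ?_
      refine Seq.cons (y := y) ⟨⟨hn', fun p hp => ?_⟩, hrp, fun p => ?_⟩ ih
      · dsimp only at hp ⊢
        rw [if_pos (hUE.1 hp), hUE.2 p hp]
        exact Finset.mem_singleton_self n'
      · rw [heq p, hparties]
        dsimp only
        by_cases hp' : p ∈ N1.parties n'
        · rw [if_pos hp', if_pos (hUE.1 hp'), htrans1 r' hrp p hp']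
        · rw [if_neg hp']
          by_cases hpn : p ∈ N1.parties n
          · rw [if_pos hpn, if_pos hpn, htrans2 r' hrp p hpn hp']
          · rw [if_neg hpn, if_neg hpn]
    · rw [if_neg ho]
      obtain ⟨a, s⟩ := o
      obtain ⟨⟨ha2, hen⟩, hsres, heq⟩ := hst
      dsimp only at ha2 hen hsres heq
      simp only [List.cons_append, List.nil_append]
      by_cases han : a = n
      · subst a
        rw [hresn2] at hsres
        have hs' : s ∈ (N1.results n).erase r := by
          rcases Finset.mem_insert.1 hsres with rfl | hs'
          · exact absurd rfl ho
          · exact hs'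
        refine Seq.cons (y := y)
          ⟨⟨hn, fun p hp => hen p (by rw [hparties]; exact hp)⟩,
            Finset.mem_of_mem_erase hs', fun p => ?_⟩ ih
        rw [heq p, hparties, htrans3 s hs' p]
      · rw [hresm a han] at hsres
        refine Seq.cons (y := y)
          ⟨⟨hsub ha2, fun p hp => hen p (by rw [hparties]; exact hp)⟩, hsres, fun p => ?_⟩ ih
        rw [heq p, hparties, htransm a han]

lemma shortcut_mu_lt (hacyc : N1.Acyclic) (h : DShortcutRule N1 N2) : N2.mu < N1.mu := by
  obtain ⟨n, r, n', f, hrule, hcard⟩ := h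
  obtain ⟨r', hr'⟩ : ∃ r', N1.results n' = {r'} :=
    Finset.card_eq_one.1
      (le_antisymm hcard (Finset.card_pos.2 (N1.results_nonempty n' hrule.2.1)))
  have hsub := shortcut_atoms_sub hrule
  have hexp := shortcut_seq hrule hr'
  obtain ⟨hn, hn', hr, hne, hUE, hdisj, hinj, hfresh, hn0, hparties, hresn, hresm,
    htrans1, htrans2, htrans3, htransm, hatomsE, hatomsNE, hnfE, hnfNE⟩ := hrule
  have hrp : r' ∈ N1.results n' := hr' ▸ Finset.mem_singleton_self r'
  have hfrn : f r' ∉ N1.results n := hfresh r' hrp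
  have hresn2 : N2.results n = insert (f r') ((N1.results n).erase r) := by
    rw [hresn, hr', Finset.image_singleton, Finset.union_comm, ← Finset.insert_eq]
  have hxAt : ∀ a, N1.xAt a = N2.xAt a := by
    intro a; funext p; simp [xAt, hparties]
  -- parties condition transported through expansion
  have hexppar : ∀ (a : Atom) (σ : List (Atom × Res)),
      (∀ o ∈ σ, N1.parties o.1 ⊆ N1.parties a) → N1.parties n ⊆ N1.parties a →
      ∀ o ∈ expandL n n' r r' (f r') σ, N1.parties o.1 ⊆ N1.parties a := by
    intro a σ
    induction σ with
    | nil => intro _ _; simp [expandL]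
    | cons o τ ih =>
      intro hσ hna o' ho'
      rw [expandL] at ho'
      rcases List.mem_append.1 ho' with ho' | ho'
      · by_cases hcase : o = (n, f r')
        · rw [if_pos hcase] at ho'
          rcases (by simpa using ho' : o' = (n, r) ∨ o' = (n', r')) with rfl | rfl
          · exact hna
          · exact hUE.1.trans hna
        · rw [if_neg hcase] at ho'
          have ho2 : o' = o := by simpa using ho'
          rw [ho2]
          exact hσ o List.mem_cons_self
      · exact ih (fun o ho => hσ o (List.mem_cons_of_mem _ ho)) hna o' ho'
  -- mapping of NRSeq's
  have hnrmap : ∀ a s σ, N2.NRSeq a s σ → (a, s) ≠ (n, f r') →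
      N1.NRSeq a s (expandL n n' r r' (f r') σ) := by
    rintro a s σ ⟨⟨τ, rfl⟩, ⟨y, hseq⟩, hpar⟩ hne'
    simp only [hparties] at hpar
    have hana : N1.parties n ⊆ N1.parties a ∨ (∀ o ∈ (a, s) :: τ, o.1 ≠ n) := by
      by_cases hcase : ∃ o ∈ (a, s) :: τ, o.1 = n
      · obtain ⟨o, ho, hon⟩ := hcase
        exact Or.inl (hon ▸ hpar o ho)
      · push_neg at hcase
        exact Or.inr hcase
    refine ⟨⟨expandL n n' r r' (f r') τ,
        by rw [expandL, if_neg hne', List.singleton_append]⟩,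
      ⟨y, by rw [hxAt]; exact hexp _ _ _ hseq⟩, ?_⟩
    · rcases hana with hana | hana
      · exact hexppar a _ hpar hana
      · -- no element has atom n, so the expansion is pointwise trivial
        intro o' ho'
        have : ∀ (σ' : List (Atom × Res)), (∀ o ∈ σ', o.1 ≠ n) →
            expandL n n' r r' (f r') σ' = σ' := by
          intro σ' hσ'
          induction σ' with
          | nil => simp [expandL]
          | cons o τ' ih =>
            have hon : o ≠ (n, f r') := by
              intro hcon
              exact hσ' o List.mem_cons_self (by rw [hcon])
            rw [expandL, if_neg hon, List.singleton_append,
              ih (fun o ho => hσ' o (List.mem_cons_of_mem _ ho))]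
        rw [this _ hana] at ho'
        exact hpar o' ho'
  have hnrmap2 : ∀ σ, N2.NRSeq n (f r') σ →
      N1.NRSeq n r (expandL n n' r r' (f r') σ) ∧
        σ.length + 1 ≤ (expandL n n' r r' (f r') σ).length := by
    rintro σ ⟨⟨τ, rfl⟩, ⟨y, hseq⟩, hpar⟩
    simp only [hparties] at hpar
    constructor
    · refine ⟨⟨(n', r') :: expandL n n' r r' (f r') τ, by simp [expandL]⟩,
        ⟨y, by rw [hxAt]; exact hexp _ _ _ hseq⟩, ?_⟩
      exact hexppar n _ hpar (le_refl _)
    · rw [expandL, if_pos rfl]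
      simp only [List.cons_append, List.nil_append, List.length_cons]
      have := expandL_length n n' r r' (f r') τ
      omega
  have hbdd : ∀ a s, BddAbove (N1.lenSet a s) := fun a s => lenSet_bddAbove hacyc a s
  have hle : ∀ a s, (a, s) ≠ (n, f r') → N2.hIdx a s ≤ N1.hIdx a s := by
    intro a s hne'
    refine csSup_le' ?_
    rintro l ⟨σ, hσ, rfl⟩
    exact le_trans (expandL_length n n' r r' (f r') σ)
      (le_csSup (hbdd a s) ⟨_, hnrmap a s σ hσ hne', rfl⟩)
  have hlt : N2.hIdx n (f r') < N1.hIdx n r := by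
    have h1 : N2.hIdx n (f r') + 1 ≤ N1.hIdx n r := by
      refine sSup_add_le ?_ (hIdx_pos hacyc hn hr)
      rintro l ⟨σ, hσ, rfl⟩
      obtain ⟨hnr1, hlen1⟩ := hnrmap2 σ hσ
      exact le_trans hlen1 (le_csSup (hbdd n r) ⟨_, hnr1, rfl⟩)
    omega
  -- now sum up
  have hflt : (N2.results n).sum (fun s => N2.hIdx n s) <
      (N1.results n).sum (fun s => N1.hIdx n s) := by
    have hfr_not : f r' ∉ (N1.results n).erase r := fun h' => hfrn (Finset.mem_of_mem_erase h')
    have hsum1 : ((N1.results n).erase r).sum (fun s => N2.hIdx n s) ≤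
        ((N1.results n).erase r).sum (fun s => N1.hIdx n s) := by
      refine Finset.sum_le_sum fun s hs => hle n s ?_
      intro hcon
      have : s = f r' := congrArg Prod.snd hcon
      exact hfr_not (this ▸ hs)
    have hsum2 : ((N1.results n).erase r).sum (fun s => N1.hIdx n s) + N1.hIdx n r =
        (N1.results n).sum (fun s => N1.hIdx n s) := Finset.sum_erase_add _ _ hr
    rw [hresn2, Finset.sum_insert hfr_not]
    omega
  have hnmem2 : n ∈ N2.atoms := by
    by_cases hex : N1.ExclusiveAccess n r n'
    · rw [hatomsE hex]
      exact Finset.mem_erase.2 ⟨Ne.symm hne, hn⟩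
    · rw [hatomsNE hex]; exact hn
  calc N2.mu < N2.atoms.sum (fun a => (N1.results a).sum fun s => N1.hIdx a s) := by
        refine Finset.sum_lt_sum (fun a ha => ?_) ⟨n, hnmem2, hflt⟩
        by_cases han : a = n
        · subst a; exact hflt.le
        · rw [hresm a han]
          refine Finset.sum_le_sum fun s _ => hle a s ?_
          intro hcon
          exact han (congrArg Prod.fst hcon)
    _ ≤ N1.mu := Finset.sum_le_sum_of_subset hsub

end ShortcutL

/-- Every reduction sequence of an acyclic negotiation with `K` atoms and `L` outcomes
consisting only of applications of the merge and d-shortcut rules has length at most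
`K · L`. -/
theorem statement9 (N : Negotiation Agent Atom Res) (hacyc : N.Acyclic)
    (g : ℕ → Negotiation Agent Atom Res) (m : ℕ) (h0 : g 0 = N)
    (hstep : ∀ i < m, MergeRule (g i) (g (i + 1)) ∨ DShortcutRule (g i) (g (i + 1))) :
    m ≤ N.atoms.card * N.atoms.sum (fun n => (N.results n).card) := by
  have hstep' : ∀ i, i < m → (g i).Acyclic → (g (i + 1)).Acyclic ∧ (g (i + 1)).mu < (g i).mu := by
    intro i him hac
    rcases hstep i him with h | h
    · exact ⟨merge_acyclic h hac, merge_mu_lt hac h⟩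
    · obtain ⟨n, r, n', f, hrule, hcard⟩ := h
      obtain ⟨r', hr'⟩ : ∃ r', (g i).results n' = {r'} :=
        Finset.card_eq_one.1
          (le_antisymm hcard (Finset.card_pos.2 ((g i).results_nonempty n' hrule.2.1)))
      exact ⟨shortcut_acyclic hrule hr' hac, shortcut_mu_lt hac ⟨n, r, n', f, hrule, hcard⟩⟩
  have key : ∀ i, i ≤ m → (g i).Acyclic ∧ i + (g i).mu ≤ (g 0).mu := by
    intro i
    induction i with
    | zero => intro _; exact ⟨by rw [h0]; exact hacyc, by omega⟩
    | succ j ih =>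
      intro hle
      obtain ⟨hac, hmu⟩ := ih (by omega)
      obtain ⟨hac', hlt⟩ := hstep' j (by omega) hac
      exact ⟨hac', by omega⟩
  obtain ⟨-, hm⟩ := key m le_rfl
  have h1 : (g 0).mu ≤ N.atoms.card * N.atoms.sum (fun n => (N.results n).card) := by
    rw [h0]; exact mu_le hacyc
  omega

end Negotiation
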